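/- Let G be a finite simple graph, v a vertex of minimal degree in G, and suppose G contains an induced cycle C of length m ≥ 5 inside the closed neighborhood of v, with some vertex w of G not adjacent to v. If G has no induced 4-cycle, then w is adjacent to at most two vertices of C, and any two neighbors of w on C are adjacent on C (consecutive). -/

import Mathlib

open SimpleGraph

private lemma cycle_adj_val {m : ℕ} (hm : 5 ≤ m) {u v : Fin m}
    (h : (cycleGraph m).Adj u v) :
    u.val + 1 = v.val ∨ v.val + 1 = u.val ∨ (u.val = 0 ∧ v.val + 1 = m) ∨
      (v.val = 0 ∧ u.val + 1 = m) := by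
  have hu := u.isLt
  have hv := v.isLt
  rw [cycleGraph_adj'] at h
  have key : ∀ a b : Fin m, (a - b).val = 1 → a.val = b.val + 1 ∨ (b.val + 1 = m ∧ a.val = 0) := by
    intro a b hab
    rw [Fin.sub_def] at hab
    simp only at hab
    rcases Nat.lt_or_ge (m - b.val + a.val) m with hlt | hge
    · rw [Nat.mod_eq_of_lt hlt] at hab
      have := a.isLt; have := b.isLt; omega
    · rw [Nat.mod_eq_sub_mod hge] at hab
      have h2 : m - b.val + a.val - m < m := by have := a.isLt; have := b.isLt; omega
      rw [Nat.mod_eq_of_lt h2] at hab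
      have := a.isLt; have := b.isLt; omega
  rcases h with h | h
  · rcases key u v h with h' | h' <;> omega
  · rcases key v u h with h' | h' <;> omega

private lemma cycle_no_triangle {m : ℕ} (hm : 5 ≤ m) {i j k : Fin m}
    (hij : (cycleGraph m).Adj i j) (hik : (cycleGraph m).Adj i k)
    (hjk : (cycleGraph m).Adj j k) : False := by
  have h1 := cycle_adj_val hm hij
  have h2 := cycle_adj_val hm hik
  have h3 := cycle_adj_val hm hjk
  have hij' : i.val ≠ j.val := fun h => hij.ne (Fin.ext h)
  have hik' : i.val ≠ k.val := fun h => hik.ne (Fin.ext h)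
  have hjk' : j.val ≠ k.val := fun h => hjk.ne (Fin.ext h)
  omega

/-- Let `v` have minimal degree in `G`, let `f` be an induced cycle of
length `m ≥ 5` lying inside the closed neighborhood of `v`, and let `w` be a vertex
not adjacent to `v` (and distinct from `v`).  If `G` has no induced 4-cycle, then `w`
is adjacent to at most two vertices of the cycle, and any two of its neighbors on the
cycle are consecutive on the cycle. -/
theorem outside_vertex_sees_at_most_two {V : Type*} [Fintype V] [DecidableEq V]
    (G : SimpleGraph V) [DecidableRel G.Adj] (v w : V) (m : ℕ) (hm : 5 ≤ m)
    (hmin : ∀ u : V, G.degree v ≤ G.degree u)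
    (f : cycleGraph m ↪g G)
    (hin : ∀ i : Fin m, f i = v ∨ G.Adj v (f i))
    (hwv : w ≠ v) (hnadj : ¬ G.Adj v w)
    (hC4 : IsEmpty (cycleGraph 4 ↪g G)) :
    {i : Fin m | G.Adj w (f i)}.ncard ≤ 2 ∧
      ∀ i j : Fin m, G.Adj w (f i) → G.Adj w (f j) → i ≠ j →
        (cycleGraph m).Adj i j := by
  have hadjv : ∀ i : Fin m, G.Adj w (f i) → G.Adj v (f i) := by
    intro i hi
    rcases hin i with h | h
    · exact absurd (h ▸ hi).symm hnadj
    · exact h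
  have hkey : ∀ i j : Fin m, G.Adj w (f i) → G.Adj w (f j) → i ≠ j →
      (cycleGraph m).Adj i j := by
    intro i j hi hj hij
    by_contra hnadjij
    have hfij : ¬ G.Adj (f i) (f j) := fun h => hnadjij (f.map_adj_iff.mp h)
    have hvi : G.Adj v (f i) := hadjv i hi
    have hvj : G.Adj v (f j) := hadjv j hj
    have hfne : f i ≠ f j := fun h => hij (f.injective h)
    -- build an induced C4: v, f i, w, f j
    refine hC4.elim ?_
    refine ⟨⟨![v, f i, w, f j], ?_⟩, ?_⟩
    · intro a b hab
      fin_cases a <;> fin_cases b <;>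
        simp only [Matrix.cons_val_zero, Matrix.cons_val_one, Matrix.head_cons,
          Matrix.cons_val_two, Matrix.tail_cons, Matrix.cons_val_three] at hab <;>
        first
          | rfl
          | exact absurd hab hvi.ne
          | exact absurd hab hvi.ne'
          | exact absurd hab hvj.ne
          | exact absurd hab hvj.ne'
          | exact absurd hab hi.ne
          | exact absurd hab hi.ne'
          | exact absurd hab hj.ne
          | exact absurd hab hj.ne'
          | exact absurd hab hwv
          | exact absurd hab (Ne.symm hwv)
          | exact absurd hab hfne
          | exact absurd hab hfne.symm
    · intro a b
      fin_cases a <;> fin_cases b <;>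
        simp only [Function.Embedding.coeFn_mk, Matrix.cons_val_zero, Matrix.cons_val_one,
          Matrix.head_cons, Matrix.cons_val_two, Matrix.tail_cons, Matrix.cons_val_three] <;>
        first
          | exact iff_of_false G.irrefl (by decide)
          | exact iff_of_true hvi (by decide)
          | exact iff_of_true hvi.symm (by decide)
          | exact iff_of_true hvj (by decide)
          | exact iff_of_true hvj.symm (by decide)
          | exact iff_of_true hi (by decide)
          | exact iff_of_true hi.symm (by decide)
          | exact iff_of_true hj (by decide)
          | exact iff_of_true hj.symm (by decide)
          | exact iff_of_false hnadj (by decide)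
          | exact iff_of_false (fun h => hnadj h.symm) (by decide)
          | exact iff_of_false hfij (by decide)
          | exact iff_of_false (fun h => hfij h.symm) (by decide)
  refine ⟨?_, hkey⟩
  by_contra hcard
  push_neg at hcard
  have h3 : 2 < {i : Fin m | G.Adj w (f i)}.ncard := hcard
  obtain ⟨i, hi, j, hj, k, hk, hij, hik, hjk⟩ :=
    (Set.two_lt_ncard (Set.toFinite _)).mp h3
  exact cycle_no_triangle hm (hkey i j hi hj hij) (hkey i k hi hk hik) (hkey j k hj hk hjk)
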